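/- Suppose Q = Q(A_1, …, A_n) where each A_i is a finite Q-subdirectly irreducible algebra and A_i does not embed into A_j for i ≠ j. Then {A_1, …, A_n} is, up to isomorphism, the unique minimal generating set for Q: for any finite set of finite algebras {B_1,…,B_k} with Q(B_1,…,B_k) = Q, the multiset [|A_1|,…,|A_n|] is ≤_m the multiset [|B_1|,…,|B_k|], and if {B_1,…,B_k} is also minimal then each B_i is isomorphic to some A_j. -/

import Mathlib

/-- An algebraic signature: a type of operation symbols with arities. -/
structure Signature where
  ops : Type
  arity : ops → ℕ

/-- An algebra for a signature `S`. -/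
structure Alg (S : Signature) where
  carrier : Type
  interp : ∀ o : S.ops, (Fin (S.arity o) → carrier) → carrier

/-- Terms over a set `X` of variables. -/
inductive Term (S : Signature) (X : Type) : Type where
  | var : X → Term S X
  | op : (o : S.ops) → (Fin (S.arity o) → Term S X) → Term S X

variable {S : Signature}

/-- Evaluation of a term in an algebra under an assignment of variables. -/
def Term.eval {X : Type} (A : Alg S) (h : X → A.carrier) : Term S X → A.carrier
  | .var x => h x
  | .op o args => A.interp o (fun i => (args i).eval A h)

/-- Application of a substitution to a term. -/
def Term.subst (σ : ℕ → Term S ℕ) : Term S ℕ → Term S ℕ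
  | .var x => σ x
  | .op o args => .op o (fun i => (args i).subst σ)

/-- Homomorphisms of algebras. -/
def IsHom (A B : Alg S) (f : A.carrier → B.carrier) : Prop :=
  ∀ (o : S.ops) (args : Fin (S.arity o) → A.carrier),
    f (A.interp o args) = B.interp o (fun i => f (args i))

/-- Embeddings of algebras: injective homomorphisms. -/
def IsEmbedding (A B : Alg S) (f : A.carrier → B.carrier) : Prop :=
  IsHom A B f ∧ Function.Injective f

/-- `A` embeds into `B` (i.e. `A` is isomorphic to a subalgebra of `B`). -/
def Embeds (A B : Alg S) : Prop := ∃ f, IsEmbedding A B f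

/-- Isomorphism of algebras. -/
def Iso (A B : Alg S) : Prop := ∃ f, IsHom A B f ∧ Function.Bijective f

/-- Product of a family of algebras. -/
def ProdAlg {I : Type} (F : I → Alg S) : Alg S where
  carrier := ∀ i, (F i).carrier
  interp o args i := (F i).interp o (fun j => args j i)

/-- Binary product of algebras. -/
def Alg.prod (A B : Alg S) : Alg S where
  carrier := A.carrier × B.carrier
  interp o args := (A.interp o (fun i => (args i).1), B.interp o (fun i => (args i).2))

/-- `A` is a subdirect product of the family `F`: there is an embedding of `A`
into the product whose composition with each projection is surjective. -/
def IsSubdirectProduct (A : Alg S) {I : Type} (F : I → Alg S) : Prop :=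
  ∃ f : A.carrier → (ProdAlg F).carrier,
    IsEmbedding A (ProdAlg F) f ∧ ∀ i, Function.Surjective (fun a => f a i)

/-- An equation: an ordered pair of terms. -/
abbrev Eqn (S : Signature) (X : Type) := Term S X × Term S X

/-- An equation holds in an algebra. -/
def Alg.SatisfiesEqn {X : Type} (A : Alg S) (e : Eqn S X) : Prop :=
  ∀ h : X → A.carrier, e.1.eval A h = e.2.eval A h

/-- An equation is valid in a class of algebras. -/
def EqValid (K : Set (Alg S)) (e : Eqn S ℕ) : Prop := ∀ A ∈ K, A.SatisfiesEqn e

/-- A quasiequation: finitely many premises and one conclusion. -/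
structure Quasieq (S : Signature) where
  prem : List (Eqn S ℕ)
  concl : Eqn S ℕ

/-- A quasiequation holds in an algebra. -/
def Alg.SatisfiesQ (A : Alg S) (q : Quasieq S) : Prop :=
  ∀ h : ℕ → A.carrier,
    (∀ e ∈ q.prem, e.1.eval A h = e.2.eval A h) →
      q.concl.1.eval A h = q.concl.2.eval A h

/-- The quasivariety generated by `K`: the class axiomatized by all
quasiequations valid in `K`. -/
def QGen (K : Set (Alg S)) : Set (Alg S) :=
  { A | ∀ q : Quasieq S, (∀ B ∈ K, B.SatisfiesQ q) → A.SatisfiesQ q }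

/-- The variety generated by `K`: the class axiomatized by all
equations valid in `K`. -/
def VGen (K : Set (Alg S)) : Set (Alg S) :=
  { A | ∀ e : Eqn S ℕ, (∀ B ∈ K, B.SatisfiesEqn e) → A.SatisfiesEqn e }

/-- A quasivariety is a class axiomatizable by quasiequations. -/
def IsQuasivariety (Q : Set (Alg S)) : Prop := QGen Q = Q

/-- `A` is `Q`-subdirectly irreducible: `A ∈ Q` and for every `Q`-subdirect
representation of `A`, `A` is isomorphic to one of the components. -/
def QSubdirectlyIrreducible (Q : Set (Alg S)) (A : Alg S) : Prop :=
  A ∈ Q ∧ ∀ (I : Type) (F : I → Alg S), (∀ i, F i ∈ Q) →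
    IsSubdirectProduct A F → ∃ i, Iso A (F i)

/-- A congruence on an algebra. -/
structure Cong (A : Alg S) where
  r : A.carrier → A.carrier → Prop
  iseqv : Equivalence r
  compat : ∀ (o : S.ops) (a b : Fin (S.arity o) → A.carrier),
    (∀ i, r (a i) (b i)) → r (A.interp o a) (A.interp o b)

def Cong.setoid {A : Alg S} (θ : Cong A) : Setoid A.carrier := ⟨θ.r, θ.iseqv⟩

/-- Quotient algebra of `A` by a congruence `θ`. -/
noncomputable def QuotAlg (A : Alg S) (θ : Cong A) : Alg S where
  carrier := Quotient θ.setoid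
  interp o args := Quotient.mk θ.setoid (A.interp o (fun i => (args i).out))

/-- The term algebra over variables `X`. -/
def TermAlg (S : Signature) (X : Type) : Alg S where
  carrier := Term S X
  interp := Term.op

/-- The congruence of all identifications valid in `K` on the term algebra:
the intersection of all congruences whose quotient embeds into a member of `K`. -/
def freeCong (K : Set (Alg S)) (X : Type) : Cong (TermAlg S X) where
  r φ ψ := ∀ A ∈ K, ∀ h : X → A.carrier, φ.eval A h = ψ.eval A h
  iseqv := by
    constructor
    · intro φ A hA h; rfl
    · intro φ ψ H A hA h; exact (H A hA h).symm
    · intro a b c H1 H2 A hA h; exact (H1 A hA h).trans (H2 A hA h)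
  compat := by
    intro o a b hab A hA h
    show Term.eval A h (Term.op o a) = Term.eval A h (Term.op o b)
    simp only [Term.eval]
    congr 1
    funext i
    exact hab i A hA h

/-- The free algebra of `K` over variables `X`. -/
noncomputable def FreeAlg (K : Set (Alg S)) (X : Type) : Alg S :=
  QuotAlg (TermAlg S X) (freeCong K X)

/-- `σ` is a `K`-unifier of the finite set of equations `Γ`. -/
def Unifier (K : Set (Alg S)) (σ : ℕ → Term S ℕ) (Γ : List (Eqn S ℕ)) : Prop :=
  ∀ e ∈ Γ, EqValid K (e.1.subst σ, e.2.subst σ)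

/-- `Γ` is `K`-unifiable. -/
def Unifiable (K : Set (Alg S)) (Γ : List (Eqn S ℕ)) : Prop := ∃ σ, Unifier K σ Γ

/-- The quasiequation `Γ ⇒ e` is `K`-admissible: every `K`-unifier of the
premises unifies the conclusion. -/
def Admissible (K : Set (Alg S)) (Γ : List (Eqn S ℕ)) (e : Eqn S ℕ) : Prop :=
  ∀ σ, Unifier K σ Γ → EqValid K (e.1.subst σ, e.2.subst σ)

/-- The quasiequation `Γ ⇒ e` is valid in the class `K` (`Γ ⊨_K e`). -/
def Models (K : Set (Alg S)) (Γ : List (Eqn S ℕ)) (e : Eqn S ℕ) : Prop :=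
  ∀ A ∈ K, ∀ h : ℕ → A.carrier,
    (∀ e' ∈ Γ, e'.1.eval A h = e'.2.eval A h) → e.1.eval A h = e.2.eval A h

/-- `Γ` is satisfiable in the algebra `A`. -/
def SatIn (A : Alg S) (Γ : List (Eqn S ℕ)) : Prop :=
  ∃ h : ℕ → A.carrier, ∀ e ∈ Γ, e.1.eval A h = e.2.eval A h

/-- The Dershowitz–Manna ordering on multisets of natural numbers. -/
def MsLE (M N : Multiset ℕ) : Prop :=
  ∀ x, N.count x < M.count x → ∃ y, x < y ∧ M.count y < N.count y

/-- The multiset of cardinalities of a finite family of algebras. -/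
noncomputable def cardsOf {S : Signature} {n : ℕ} (A : Fin n → Alg S) : Multiset ℕ :=
  ↑(List.ofFn fun i => Nat.card (A i).carrier)


section Aux
variable {S : Signature}

theorem eval_hom {A B : Alg S} {f : A.carrier → B.carrier} (hf : IsHom A B f)
    {X : Type} (h : X → A.carrier) (t : Term S X) :
    f (t.eval A h) = t.eval B (fun x => f (h x)) := by
  induction t with
  | var x => rfl
  | op o args ih =>
    show f (A.interp o _) = B.interp o _
    rw [hf o]
    congr 1
    funext i
    exact ih i

theorem mem_QGen_self {K : Set (Alg S)} {A : Alg S} (hA : A ∈ K) : A ∈ QGen K :=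
  fun q hq => hq A hA

theorem qgen_embeds {K : Set (Alg S)} {A B : Alg S} (hB : B ∈ QGen K)
    (hAB : Embeds A B) : A ∈ QGen K := by
  obtain ⟨f, hf, hinj⟩ := hAB
  intro q hq h hprem
  have hB' := hB q hq
  have := hB' (fun x => f (h x)) ?_
  · rw [← eval_hom hf, ← eval_hom hf] at this
    exact hinj this
  · intro e he
    rw [← eval_hom hf, ← eval_hom hf, hprem e he]

theorem iso_embeds {A B : Alg S} (h : Iso A B) : Embeds A B := by
  obtain ⟨f, hf, hbij⟩ := h
  exact ⟨f, hf, hbij.1⟩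

theorem embeds_trans {A B C : Alg S} (h1 : Embeds A B) (h2 : Embeds B C) : Embeds A C := by
  obtain ⟨f, hf, hfi⟩ := h1
  obtain ⟨g, hg, hgi⟩ := h2
  refine ⟨g ∘ f, ?_, hgi.comp hfi⟩
  intro o args
  show g (f _) = _
  rw [hf o, hg o]
  rfl

theorem iso_symm {A B : Alg S} (h : Iso A B) : Iso B A := by
  obtain ⟨f, hf, hbij⟩ := h
  obtain ⟨g, hgl, hgr⟩ := Function.bijective_iff_has_inverse.mp hbij
  refine ⟨g, ?_, Function.bijective_iff_has_inverse.mpr ⟨f, hgr, hgl⟩⟩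
  intro o args
  apply hbij.1
  rw [hgr, hf o]
  congr 1
  funext i
  rw [hgr]

/-- Embedding between finite algebras of equal card is an iso. -/
theorem embeds_card_iso {A B : Alg S} (hA : Finite A.carrier) (hB : Finite B.carrier)
    (hcard : Nat.card A.carrier = Nat.card B.carrier) (h : Embeds A B) : Iso A B := by
  classical
  obtain ⟨f, hf, hinj⟩ := h
  cases isEmpty_or_nonempty A.carrier with
  | inl hAe =>
    have hBzero : Nat.card B.carrier = 0 := by
      rw [← hcard, Nat.card_eq_zero]; exact Or.inl hAe
    have hBe : IsEmpty B.carrier := by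
      rcases Nat.card_eq_zero.mp hBzero with h' | h'
      · exact h'
      · exact absurd h' (not_infinite_iff_finite.mpr hB)
    exact ⟨f, hf, ⟨hinj, fun b => hBe.elim b⟩⟩
  | inr hAne =>
    have : Fintype A.carrier := Fintype.ofFinite _
    have : Fintype B.carrier := Fintype.ofFinite _
    refine ⟨f, hf, hinj, ?_⟩
    have hc : Fintype.card A.carrier = Fintype.card B.carrier := by
      rw [← Nat.card_eq_fintype_card, ← Nat.card_eq_fintype_card]; exact hcard
    exact ((Fintype.bijective_iff_injective_and_card f).mpr ⟨hinj, hc⟩).2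

end Aux

section Img
variable {S : Signature}

/-- Image of a homomorphism as a subalgebra of the codomain. -/
noncomputable def ImgAlg (A B : Alg S) (h : A.carrier → B.carrier) (hh : IsHom A B h) :
    Alg S where
  carrier := Set.range h
  interp o args := ⟨B.interp o (fun i => (args i).val), by
    choose pre hpre using fun i => (args i).2
    refine ⟨A.interp o pre, ?_⟩
    rw [hh o]
    congr 1
    funext i
    exact hpre i⟩

theorem imgalg_embeds (A B : Alg S) (h : A.carrier → B.carrier) (hh : IsHom A B h) :
    Embeds (ImgAlg A B h hh) B := by
  refine ⟨Subtype.val, ?_, Subtype.val_injective⟩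
  intro o args
  rfl

/-- The natural surjective hom onto the image. -/
theorem imgalg_hom (A B : Alg S) (h : A.carrier → B.carrier) (hh : IsHom A B h) :
    IsHom A (ImgAlg A B h hh) (fun a => ⟨h a, Set.mem_range_self a⟩) := by
  intro o args
  apply Subtype.ext
  show h (A.interp o args) = B.interp o _
  rw [hh o]

end Img

section Sep
variable {S : Signature} [Finite S.ops]

/-- Separation: homs into the B j separate points of any finite member of QGen (range B). -/
theorem separation {k : ℕ} (B : Fin k → Alg S) (A : Alg S) [Finite A.carrier]
    (hA : A ∈ QGen (Set.range B)) (u v : A.carrier)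
    (hsep : ∀ j (h : A.carrier → (B j).carrier), IsHom A (B j) h → h u = h v) :
    u = v := by
  classical
  have : Fintype A.carrier := Fintype.ofFinite _
  have : Fintype S.ops := Fintype.ofFinite _
  set m := Fintype.card A.carrier with hm
  set e := Fintype.equivFin A.carrier with he
  set idx : A.carrier → ℕ := fun a => (e a : ℕ) with hidx
  -- decode function
  have hmpos : 0 < m := Fintype.card_pos_iff.mpr ⟨u⟩
  set dec : ℕ → A.carrier := fun x => if hx : x < m then e.symm ⟨x, hx⟩ else e.symm ⟨0, hmpos⟩
    with hdec
  have hdecidx : ∀ a, dec (idx a) = a := by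
    intro a
    simp only [hdec, hidx, (e a).isLt, dif_pos]
    exact (dif_pos (e a).isLt).trans (e.symm_apply_apply a)
  -- the diagram
  set diag : List (Eqn S ℕ) :=
    (Finset.univ : Finset ((o : S.ops) × (Fin (S.arity o) → A.carrier))).toList.map
      (fun p => (Term.op p.1 (fun i => Term.var (idx (p.2 i))), Term.var (idx (A.interp p.1 p.2))))
    with hdiag
  -- satisfying the diagram = being a hom
  have hdiag_hom : ∀ (C : Alg S) (h : ℕ → C.carrier),
      (∀ e' ∈ diag, e'.1.eval C h = e'.2.eval C h) ↔
      IsHom A C (fun a => h (idx a)) := by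
    intro C h
    constructor
    · intro hsat o args
      have := hsat (Term.op o (fun i => Term.var (idx (args i))),
        Term.var (idx (A.interp o args))) (by
          rw [hdiag]
          apply List.mem_map.mpr
          exact ⟨⟨o, args⟩, Finset.mem_toList.mpr (Finset.mem_univ _), rfl⟩)
      exact this.symm
    · intro hhom e' he'
      rw [hdiag] at he'
      obtain ⟨⟨o, args⟩, _, hp⟩ := List.mem_map.mp he'
      rw [← hp]
      exact (hhom o args).symm
  set q : Quasieq S := ⟨diag, (Term.var (idx u), Term.var (idx v))⟩ with hq
  have hvalid : ∀ X ∈ Set.range B, X.SatisfiesQ q := by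
    rintro X ⟨j, rfl⟩ h hprem
    exact hsep j (fun a => h (idx a)) ((hdiag_hom (B j) h).mp hprem)
  have hAq := hA q hvalid
  have := hAq dec ?_
  · have h1 : dec (idx u) = dec (idx v) := this
    rwa [hdecidx, hdecidx] at h1
  · apply (hdiag_hom A dec).mpr
    have : (fun a => dec (idx a)) = id := funext hdecidx
    rw [this]
    intro o args
    rfl

/-- Main algebraic lemma: a finite Q-SI algebra for Q = QGen(range B) embeds into some B j. -/
theorem si_embeds {k : ℕ} (B : Fin k → Alg S) (A : Alg S) [Finite A.carrier]
    (hsi : QSubdirectlyIrreducible (QGen (Set.range B)) A) :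
    ∃ j, Embeds A (B j) := by
  classical
  obtain ⟨hAQ, hsi⟩ := hsi
  set I := Σ j : Fin k, {h : A.carrier → (B j).carrier // IsHom A (B j) h} with hI
  set F : I → Alg S := fun p => ImgAlg A (B p.1) p.2.val p.2.property with hF
  have hFQ : ∀ i, F i ∈ QGen (Set.range B) := by
    rintro ⟨j, h, hh⟩
    exact qgen_embeds (mem_QGen_self ⟨j, rfl⟩) (imgalg_embeds A (B j) h hh)
  have hsub : IsSubdirectProduct A F := by
    refine ⟨fun a p => ⟨p.2.val a, Set.mem_range_self a⟩, ⟨?_, ?_⟩, ?_⟩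
    · intro o args
      funext p
      exact imgalg_hom A (B p.1) p.2.val p.2.property o args
    · intro a a' haa
      apply separation B A hAQ
      intro j h hh
      have := congrFun haa ⟨j, h, hh⟩
      exact congrArg Subtype.val this
    · rintro ⟨j, h, hh⟩ ⟨c, a, rfl⟩
      exact ⟨a, rfl⟩
  obtain ⟨⟨j, h, hh⟩, hiso⟩ := hsi I F hFQ hsub
  exact ⟨j, embeds_trans (iso_embeds hiso) (imgalg_embeds A (B j) h hh)⟩

end Sep


open Finset in
/-- counting function -/
def cnt {n : ℕ} (a : Fin n → ℕ) (x : ℕ) : ℕ := (Finset.univ.filter (fun i => a i = x)).card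

open Finset in
theorem core {n k : ℕ} (a : Fin n → ℕ) (b : Fin k → ℕ) (f : Fin n → Fin k)
    (hab : ∀ i, a i ≤ b (f i))
    (hex : ∀ i i', a i = b (f i) → f i' = f i → i' = i)
    (x : ℕ) (H : ∀ y, x < y → cnt b y ≤ cnt a y) :
    ∀ j, x < b j → ∃ i, f i = j ∧ a i = b j := by
  classical
  obtain ⟨M, hM⟩ : ∃ M, ∀ j, b j ≤ M := ⟨(Finset.univ.sup b), fun j => Finset.le_sup (mem_univ j)⟩
  suffices h : ∀ c y, M ≤ y + c → x ≤ y → ∀ j, y < b j → ∃ i, f i = j ∧ a i = b j by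
    exact h M x (by omega) le_rfl
  intro c
  induction c with
  | zero => intro y hy _ j hj; exact absurd (hM j) (by omega)
  | succ c ih =>
    intro y hy hxy j hj
    rcases Nat.lt_or_ge (y+1) (b j) with h1 | h1
    · exact ih (y+1) (by omega) (by omega) j h1
    · have hbj : b j = y + 1 := by omega
      -- every row with a i = y+1 is exact
      have hexact : ∀ i, a i = y + 1 → a i = b (f i) := by
        intro i hi
        by_contra hne
        have h2 : y + 1 < b (f i) := lt_of_le_of_ne (hi ▸ hab i) (hi ▸ hne)
        obtain ⟨i0, hfi0, hai0⟩ := ih (y+1) (by omega) (by omega) (f i) h2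
        have hii0 : i = i0 := hex i0 i (by rw [hfi0]; exact hai0) hfi0.symm
        have : a i = a i0 := by rw [hii0]
        omega
      -- injection from rows to cols at level y+1
      set R : Finset (Fin n) := Finset.univ.filter (fun i => a i = y + 1) with hR
      set C : Finset (Fin k) := Finset.univ.filter (fun j' => b j' = y + 1) with hC
      have himg : R.image f ⊆ C := by
        intro j' hj'
        obtain ⟨i, hi, hfi⟩ := Finset.mem_image.mp hj'
        have hia := (Finset.mem_filter.mp hi).2
        have := hexact i hia
        exact Finset.mem_filter.mpr ⟨mem_univ _, by rw [← hfi, ← this, hia]⟩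
      have hinj : Set.InjOn f R := by
        intro i1 h1' i2 h2' hf
        have e1 := hexact i1 (Finset.mem_filter.mp h1').2
        exact (hex i1 i2 (by rw [e1, hf]) hf.symm).symm
      have hcard : C.card ≤ (R.image f).card := by
        rw [Finset.card_image_of_injOn hinj]
        exact H (y+1) (by omega)
      have heq : R.image f = C := Finset.eq_of_subset_of_card_le himg hcard
      have hjC : j ∈ C := Finset.mem_filter.mpr ⟨mem_univ _, hbj⟩
      rw [← heq] at hjC
      obtain ⟨i, hi, hfi⟩ := Finset.mem_image.mp hjC
      exact ⟨i, hfi, by rw [hbj]; exact (Finset.mem_filter.mp hi).2⟩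

open Finset in
theorem comb_dm {n k : ℕ} (a : Fin n → ℕ) (b : Fin k → ℕ) (f : Fin n → Fin k)
    (hab : ∀ i, a i ≤ b (f i))
    (hex : ∀ i i', a i = b (f i) → f i' = f i → i' = i) :
    ∀ x, cnt b x < cnt a x → ∃ y, x < y ∧ cnt a y < cnt b y := by
  classical
  intro x hx
  by_contra hcon
  push_neg at hcon
  have H : ∀ y, x < y → cnt b y ≤ cnt a y := fun y hy => hcon y hy
  have hcore := core a b f hab hex x H
  -- every row at level x is exact
  have hexact : ∀ i, a i = x → a i = b (f i) := by
    intro i hi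
    by_contra hne
    have h2 : x < b (f i) := lt_of_le_of_ne (hi ▸ hab i) (hi ▸ hne)
    obtain ⟨i0, hfi0, hai0⟩ := hcore (f i) h2
    have hii0 : i = i0 := hex i0 i (by rw [hfi0]; exact hai0) hfi0.symm
    have : a i = a i0 := by rw [hii0]
    omega
  have himg : (Finset.univ.filter (fun i => a i = x)).image f ⊆
      Finset.univ.filter (fun j' => b j' = x) := by
    intro j' hj'
    obtain ⟨i, hi, hfi⟩ := Finset.mem_image.mp hj'
    have hia := (Finset.mem_filter.mp hi).2
    have := hexact i hia
    exact Finset.mem_filter.mpr ⟨mem_univ _, by rw [← hfi, ← this, hia]⟩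
  have hinj : Set.InjOn f (Finset.univ.filter (fun i => a i = x)) := by
    intro i1 h1' i2 h2' hf
    have e1 := hexact i1 (Finset.mem_filter.mp h1').2
    exact (hex i1 i2 (by rw [e1, hf]) hf.symm).symm
  have : cnt a x ≤ cnt b x := by
    unfold cnt
    calc (Finset.univ.filter (fun i => a i = x)).card
        = ((Finset.univ.filter (fun i => a i = x)).image f).card :=
          (Finset.card_image_of_injOn hinj).symm
      _ ≤ _ := Finset.card_le_card himg
  omega

theorem msle_antisymm {M N : Multiset ℕ} (h1 : MsLE M N) (h2 : MsLE N M) : M = N := by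
  classical
  by_contra hne
  have hD : ∃ x, M.count x ≠ N.count x := by
    by_contra hc; push_neg at hc; exact hne (Multiset.ext.mpr hc)
  set T : Finset ℕ := (M + N).toFinset.filter (fun x => M.count x ≠ N.count x) with hT
  have hmemT : ∀ x, M.count x ≠ N.count x → x ∈ T := by
    intro x hx
    refine Finset.mem_filter.mpr ⟨Multiset.mem_toFinset.mpr ?_, hx⟩
    rw [Multiset.mem_add]
    by_contra hc
    push_neg at hc
    exact hx (by rw [Multiset.count_eq_zero_of_notMem hc.1,
      Multiset.count_eq_zero_of_notMem hc.2])
  obtain ⟨x, hx⟩ := hD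
  have hTne : T.Nonempty := ⟨x, hmemT x hx⟩
  set x0 := T.max' hTne with hx0
  have hx0T := T.max'_mem hTne
  have hx0ne : M.count x0 ≠ N.count x0 := (Finset.mem_filter.mp hx0T).2
  rcases Nat.lt_or_ge (N.count x0) (M.count x0) with h | h
  · obtain ⟨y, hy1, hy2⟩ := h1 x0 h
    exact absurd (T.le_max' y (hmemT y (Nat.ne_of_lt hy2))) (by omega)
  · have h' : M.count x0 < N.count x0 := lt_of_le_of_ne h hx0ne
    obtain ⟨y, hy1, hy2⟩ := h2 x0 h'
    exact absurd (T.le_max' y (hmemT y (Nat.ne_of_gt hy2))) (by omega)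

theorem iso_of_empty {S : Signature} {A B : Alg S} (hA : IsEmpty A.carrier)
    (hB : IsEmpty B.carrier) : Iso A B :=
  ⟨fun a => hA.elim a, fun o args => hA.elim (A.interp o args),
    fun a => hA.elim a, fun b => hB.elim b⟩

theorem cards_count {S : Signature} {n : ℕ} (A : Fin n → Alg S) (x : ℕ) :
    (cardsOf A).count x = cnt (fun i => Nat.card (A i).carrier) x := by
  classical
  show (↑(List.ofFn fun i => Nat.card (A i).carrier) : Multiset ℕ).count x = _
  unfold cnt
  rw [List.ofFn_eq_map, ← Multiset.map_coe, Multiset.count_map, Fin.univ_def]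
  unfold Finset.filter Finset.card
  simp only [eq_comm]

/-- If `Q = Q(A_1,…,A_n)` with each `A_i` finite, `Q`-subdirectly irreducible,
and no `A_i` embedding into a different `A_j`, then `{A_1,…,A_n}` is the unique
minimal generating set of `Q` up to isomorphism: the multiset of its cardinalities
is `≤ₘ` that of any finite generating set of finite algebras, and any minimal
generating set consists of isomorphic copies of the `A_i`. -/
theorem stmt5 {S : Signature} [Finite S.ops] {n : ℕ} (A : Fin n → Alg S)
    (hfin : ∀ i, Finite (A i).carrier)
    (hirr : ∀ i, QSubdirectlyIrreducible (QGen (Set.range A)) (A i))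
    (hne : ∀ i j, i ≠ j → ¬ Embeds (A i) (A j)) :
    (∀ (k : ℕ) (B : Fin k → Alg S), (∀ j, Finite (B j).carrier) →
        QGen (Set.range B) = QGen (Set.range A) →
        MsLE (cardsOf A) (cardsOf B)) ∧
    (∀ (k : ℕ) (B : Fin k → Alg S), (∀ j, Finite (B j).carrier) →
        QGen (Set.range B) = QGen (Set.range A) →
        (∀ (m : ℕ) (C : Fin m → Alg S), (∀ l, Finite (C l).carrier) →
            QGen (Set.range C) = QGen (Set.range A) →
            MsLE (cardsOf B) (cardsOf C)) →
        ∀ j, ∃ i, Iso (B j) (A i)) := by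
  classical
  -- common setup for any generating family B
  have key : ∀ (k : ℕ) (B : Fin k → Alg S), (∀ j, Finite (B j).carrier) →
      QGen (Set.range B) = QGen (Set.range A) →
      ∃ f : Fin n → Fin k,
        (∀ i, Embeds (A i) (B (f i))) ∧
        (∀ i, Nat.card (A i).carrier ≤ Nat.card (B (f i)).carrier) ∧
        (∀ i i', Nat.card (A i).carrier = Nat.card (B (f i)).carrier →
          f i' = f i → i' = i) := by
    intro k B hBfin hQB
    have hemb : ∀ i, ∃ j, Embeds (A i) (B j) := by
      intro i
      haveI := hfin i
      have hsi : QSubdirectlyIrreducible (QGen (Set.range B)) (A i) := by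
        rw [hQB]; exact hirr i
      exact si_embeds B (A i) hsi
    choose f hf using hemb
    refine ⟨f, hf, ?_, ?_⟩
    · intro i
      obtain ⟨g, _, hinj⟩ := hf i
      haveI := hBfin (f i)
      exact Nat.card_le_card_of_injective g hinj
    · intro i i' hcard hfe
      by_contra hii
      haveI := hfin i
      haveI := hBfin (f i)
      have hiso : Iso (A i) (B (f i)) := embeds_card_iso (hfin i) (hBfin (f i)) hcard (hf i)
      have h1 : Embeds (A i') (B (f i)) := hfe ▸ hf i'
      have h2 : Embeds (A i') (A i) :=
        embeds_trans h1 (iso_embeds (iso_symm hiso))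
      exact hne i' i hii h2
  have part1 : ∀ (k : ℕ) (B : Fin k → Alg S), (∀ j, Finite (B j).carrier) →
      QGen (Set.range B) = QGen (Set.range A) →
      MsLE (cardsOf A) (cardsOf B) := by
    intro k B hBfin hQB
    obtain ⟨f, _, hab, hex⟩ := key k B hBfin hQB
    intro x hx
    rw [cards_count, cards_count] at hx
    obtain ⟨y, hy1, hy2⟩ := comb_dm _ _ f hab hex x hx
    exact ⟨y, hy1, by rw [cards_count, cards_count]; exact hy2⟩
  refine ⟨part1, ?_⟩
  intro k B hBfin hQB hmin j
  obtain ⟨f, hf, hab, hex⟩ := key k B hBfin hQB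
  have h1 : MsLE (cardsOf A) (cardsOf B) := part1 k B hBfin hQB
  have h2 : MsLE (cardsOf B) (cardsOf A) := hmin n A hfin rfl
  have hcards : cardsOf A = cardsOf B := msle_antisymm h1 h2
  have hcnt : ∀ x, cnt (fun i => Nat.card (A i).carrier) x
      = cnt (fun j => Nat.card (B j).carrier) x := by
    intro x
    rw [← cards_count, ← cards_count, hcards]
  rcases Nat.eq_zero_or_pos (Nat.card (B j).carrier) with hbj | hbj
  · -- B j is empty; find an empty A i
    have hBempty : IsEmpty (B j).carrier := by
      rcases Nat.card_eq_zero.mp hbj with h' | h'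
      · exact h'
      · exact absurd h' (not_infinite_iff_finite.mpr (hBfin j))
    have hjmem : 0 < cnt (fun j => Nat.card (B j).carrier) 0 :=
      Finset.card_pos.mpr ⟨j, Finset.mem_filter.mpr ⟨Finset.mem_univ _, hbj⟩⟩
    rw [← hcnt] at hjmem
    obtain ⟨i, hi⟩ := Finset.card_pos.mp hjmem
    have hia : Nat.card (A i).carrier = 0 := (Finset.mem_filter.mp hi).2
    have hAempty : IsEmpty (A i).carrier := by
      rcases Nat.card_eq_zero.mp hia with h' | h'
      · exact h'
      · exact absurd h' (not_infinite_iff_finite.mpr (hfin i))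
    exact ⟨i, iso_of_empty hBempty hAempty⟩
  · have hcore := core (fun i => Nat.card (A i).carrier) (fun j => Nat.card (B j).carrier)
      f hab hex 0 (fun y _ => le_of_eq (hcnt y).symm) j hbj
    obtain ⟨i, hfi, hai⟩ := hcore
    have hiso : Iso (A i) (B j) := by
      have := embeds_card_iso (hfin i) (hBfin (f i)) (hfi ▸ hai) (hf i)
      rwa [hfi] at this
    exact ⟨i, iso_symm hiso⟩
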